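/- Let A be a real m × n matrix, b ∈ ℝᵐ, λ > 0, a > 0, and 0 < μ < 1/‖A‖₂². Define C₁(x) = ‖Ax − b‖₂² + λ P_a(x), C₂(x, z) = μ(C₁(x) − ‖Ax − Az‖₂²) + ‖x − z‖₂², and let (x^k) be a sequence of nonnegative vectors such that for each k, x^{k+1} is a global minimizer of C₂(·, x^k) over {x ∈ ℝⁿ : x ≥ 0}. Then the series Σ_{k=1}^∞ ‖x^{k+1} − x^k‖₂² converges; in particular ‖x^{k+1} − x^k‖₂ → 0 as k → ∞, i.e., the sequence (x^k) is asymptotically regular. -/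

import Mathlib

open Matrix Filter Topology

noncomputable def rho (a t : ℝ) : ℝ := a * |t| / (a * |t| + 1)

noncomputable def Pa {n : ℕ} (a : ℝ) (x : Fin n → ℝ) : ℝ := ∑ i, rho a (x i)

open scoped Classical in
noncomputable def l0 {n : ℕ} (x : Fin n → ℝ) : ℕ :=
  (Finset.univ.filter fun i => x i ≠ 0).card

def SOL {m n : ℕ} (A : Matrix (Fin m) (Fin n) ℝ) (b : Fin m → ℝ) : Set (Fin n → ℝ) :=
  {x | A.mulVec x = b ∧ 0 ≤ x}

noncomputable def sqN {n : ℕ} (v : Fin n → ℝ) : ℝ := ∑ i, (v i) ^ 2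

def projPos {n : ℕ} (v : Fin n → ℝ) : Fin n → ℝ := fun i => max 0 (v i)

noncomputable def C1 {m n : ℕ} (A : Matrix (Fin m) (Fin n) ℝ) (b : Fin m → ℝ)
    (lam a : ℝ) (x : Fin n → ℝ) : ℝ :=
  sqN (A.mulVec x - b) + lam * Pa a x

noncomputable def C2 {m n : ℕ} (A : Matrix (Fin m) (Fin n) ℝ) (b : Fin m → ℝ)
    (lam a mu : ℝ) (x z : Fin n → ℝ) : ℝ :=
  mu * (C1 A b lam a x - sqN (A.mulVec x - A.mulVec z)) + sqN (x - z)

noncomputable def Bmu {m n : ℕ} (A : Matrix (Fin m) (Fin n) ℝ) (b : Fin m → ℝ)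
    (mu : ℝ) (z : Fin n → ℝ) : Fin n → ℝ :=
  z + mu • (Aᵀ.mulVec (b - A.mulVec z))

lemma sqN_nonneg {n : ℕ} (v : Fin n → ℝ) : 0 ≤ sqN v :=
  Finset.sum_nonneg fun _ _ => sq_nonneg _

lemma sqN_eq_norm_sq {n : ℕ} (v : Fin n → ℝ) :
    sqN v = ‖(EuclideanSpace.equiv (Fin n) ℝ).symm v‖ ^ 2 := by
  rw [EuclideanSpace.norm_eq, Real.sq_sqrt (Finset.sum_nonneg fun _ _ => sq_nonneg _)]
  simp [sqN, Real.norm_eq_abs, sq_abs]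

open scoped Matrix.Norms.L2Operator in
lemma sqN_mulVec_le {m n : ℕ} (A : Matrix (Fin m) (Fin n) ℝ) (v : Fin n → ℝ) :
    sqN (A.mulVec v) ≤ ‖A‖ ^ 2 * sqN v := by
  have h := Matrix.l2_opNorm_mulVec A ((EuclideanSpace.equiv (Fin n) ℝ).symm v)
  rw [sqN_eq_norm_sq, sqN_eq_norm_sq, ← mul_pow]
  have hv : (A.mulVec ((EuclideanSpace.equiv (Fin n) ℝ).symm v) : Fin m → ℝ) = A.mulVec v := rfl
  rw [hv] at h
  exact pow_le_pow_left₀ (norm_nonneg _) h 2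

lemma rho_nonneg {a t : ℝ} (ha : 0 < a) : 0 ≤ rho a t := by
  unfold rho
  have h1 : 0 ≤ a * |t| := mul_nonneg ha.le (abs_nonneg _)
  positivity

lemma C1_nonneg {m n : ℕ} (A : Matrix (Fin m) (Fin n) ℝ) (b : Fin m → ℝ)
    {lam a : ℝ} (hl : 0 < lam) (ha : 0 < a) (x : Fin n → ℝ) : 0 ≤ C1 A b lam a x := by
  unfold C1
  have h2 : 0 ≤ Pa a x := Finset.sum_nonneg fun _ _ => rho_nonneg ha
  have := sqN_nonneg (A.mulVec x - b)
  nlinarith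

open scoped Matrix.Norms.L2Operator in
theorem stmt18 {m n : ℕ} (A : Matrix (Fin m) (Fin n) ℝ) (b : Fin m → ℝ)
    (lam a mu : ℝ) (hl : 0 < lam) (ha : 0 < a)
    (hmu : 0 < mu) (hmu2 : mu < 1 / ‖A‖ ^ 2)
    (xseq : ℕ → (Fin n → ℝ)) (hpos : ∀ k, 0 ≤ xseq k)
    (hstep : ∀ k, ∀ y : Fin n → ℝ, 0 ≤ y →
      C2 A b lam a mu (xseq (k + 1)) (xseq k) ≤ C2 A b lam a mu y (xseq k)) :
    Summable (fun k : ℕ => sqN (xseq (k + 1) - xseq k)) ∧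
    Filter.Tendsto (fun k : ℕ => Real.sqrt (sqN (xseq (k + 1) - xseq k)))
      Filter.atTop (nhds 0) := by
  -- ‖A‖ ≥ 0; c := 1 - mu * ‖A‖^2 > 0
  have hA2 : 0 ≤ ‖A‖ ^ 2 := sq_nonneg _
  have hc : 0 < 1 - mu * ‖A‖ ^ 2 := by
    rcases eq_or_lt_of_le hA2 with h | h
    · simp [← h]
    · have := (lt_div_iff₀ h).mp hmu2
      linarith
  set c := 1 - mu * ‖A‖ ^ 2 with hcdef
  -- key per-step inequality
  have key : ∀ k, mu * C1 A b lam a (xseq (k + 1)) + c * sqN (xseq (k + 1) - xseq k)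
      ≤ mu * C1 A b lam a (xseq k) := by
    intro k
    have h := hstep k (xseq k) (hpos k)
    have hz : C2 A b lam a mu (xseq k) (xseq k) = mu * C1 A b lam a (xseq k) := by
      simp [C2, sqN]
    rw [hz] at h
    have hA := sqN_mulVec_le A (xseq (k + 1) - xseq k)
    have hAsub : A.mulVec (xseq (k + 1)) - A.mulVec (xseq k)
        = A.mulVec (xseq (k + 1) - xseq k) := (A.mulVec_sub _ _).symm
    unfold C2 at h
    rw [hAsub] at h
    nlinarith [sqN_nonneg (xseq (k + 1) - xseq k)]
  -- partial sums bounded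
  have hbound : ∀ N : ℕ, ∑ k ∈ Finset.range N, sqN (xseq (k + 1) - xseq k)
      ≤ mu * C1 A b lam a (xseq 0) / c := by
    intro N
    have htel : c * ∑ k ∈ Finset.range N, sqN (xseq (k + 1) - xseq k)
        ≤ mu * C1 A b lam a (xseq 0) - mu * C1 A b lam a (xseq N) := by
      induction N with
      | zero => simp
      | succ N ih =>
        rw [Finset.sum_range_succ, mul_add]
        have := key N
        linarith
    have hC1N : 0 ≤ mu * C1 A b lam a (xseq N) :=
      mul_nonneg hmu.le (C1_nonneg A b hl ha _)
    rw [le_div_iff₀ hc, mul_comm]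
    linarith
  have hsum : Summable (fun k : ℕ => sqN (xseq (k + 1) - xseq k)) :=
    summable_of_sum_range_le (fun k => sqN_nonneg _) hbound
  refine ⟨hsum, ?_⟩
  have h0 : Filter.Tendsto (fun k : ℕ => sqN (xseq (k + 1) - xseq k)) Filter.atTop (nhds 0) :=
    hsum.tendsto_atTop_zero
  have : Filter.Tendsto (fun k : ℕ => Real.sqrt (sqN (xseq (k + 1) - xseq k)))
      Filter.atTop (nhds (Real.sqrt 0)) :=
    (Real.continuous_sqrt.tendsto 0).comp h0
  simpa using this
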